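/- arXiv:2411.19413 — 6 statements merged into one kernel-verified Lean document; each statement's English description precedes it below -/
import Mathlib

section
/- Let q ≠ 2 and let A ⊆ F_q^n be an S_h-linear set with h ≥ 2. Then for every integer t with 1 ≤ t ≤ h-1, no value of a t-linear combination of A equals a value of an h-linear combination of A; that is, h̄A ∩ t̄A = ∅. -/
/-- `A` is an `S_h`-linear set: all `h`-linear combinations of distinct elements of `A`
with nonzero coefficients yield distinct values, up to reordering of summands. -/
def IsShLinearSet (F : Type*) [Field F] {V : Type*} [AddCommGroup V] [Module F V]
    (A : Set V) (h : ℕ) : Prop :=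
  ∀ (a b : Fin h → V) (l m : Fin h → F),
    Function.Injective a → Function.Injective b →
    (∀ i, a i ∈ A) → (∀ i, b i ∈ A) →
    (∀ i, l i ≠ 0) → (∀ i, m i ≠ 0) →
    (∑ i, l i • a i) = (∑ i, m i • b i) →
    ∃ σ : Equiv.Perm (Fin h), (∀ i, b (σ i) = a i) ∧ (∀ i, m (σ i) = l i)

/-- The set of values of all `h`-linear combinations of `A`. -/
def hLinComb (F : Type*) [Field F] {V : Type*} [AddCommGroup V] [Module F V]
    (A : Set V) (h : ℕ) : Set V :=
  {v | ∃ (a : Fin h → V) (l : Fin h → F),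
    Function.Injective a ∧ (∀ i, a i ∈ A) ∧ (∀ i, l i ≠ 0) ∧ v = ∑ i, l i • a i}

/-- `S` is an `S_h`-set: all sums of `h` distinct elements of `S` are pairwise distinct. -/
def IsShSet {G : Type*} [AddCommGroup G] (S : Set G) (h : ℕ) : Prop :=
  ∀ (a b : Fin h → G), Function.Injective a → Function.Injective b →
    (∀ i, a i ∈ S) → (∀ i, b i ∈ S) →
    (∑ i, a i) = (∑ i, b i) → Set.range a = Set.range b

theorem stmt_3 {F : Type*} [Field F] [Fintype F] {n : ℕ} (A : Set (Fin n → F)) (h t : ℕ)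
    (hq : Fintype.card F ≠ 2) (hh : 2 ≤ h) (hA : IsShLinearSet F A h)
    (ht1 : 1 ≤ t) (ht2 : t ≤ h - 1) :
    hLinComb F A h ∩ hLinComb F A t = ∅ := by
  classical
  ext v
  simp only [Set.mem_inter_iff, Set.mem_empty_iff_false, iff_false, not_and]
  rintro ⟨a, l, ha_inj, haA, hl, rfl⟩ ⟨b, mc, hb_inj, hbA, hm, hvb⟩
  -- basic numerics
  have htlh : t < h := by omega
  have h3 : 3 ≤ Fintype.card F := by
    have h2 : 1 < Fintype.card F := Fintype.one_lt_card
    omega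
  -- choose c ≠ 0, c ≠ -1
  obtain ⟨c, hc0, hc1⟩ : ∃ c : F, c ≠ 0 ∧ c ≠ -1 := by
    by_contra hcon
    push_neg at hcon
    have hsub : (Finset.univ : Finset F) ⊆ ({0, -1} : Finset F) := by
      intro x _
      rcases eq_or_ne x 0 with hx | hx
      · simp [hx]
      · simp [hcon x hx]
    have := Finset.card_le_card hsub
    have h2 : ({0, -1} : Finset F).card ≤ 2 := Finset.card_insert_le _ _ |>.trans (by simp)
    simp [Finset.card_univ] at this
    omega
  have h1c : (1 : F) + c ≠ 0 := fun h0 => hc1 (by linear_combination h0)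
  -- indices of a landing in range b
  set T : Finset (Fin h) := Finset.univ.filter (fun i => a i ∈ Set.range b) with hT_def
  have hTcard : T.card ≤ t := by
    have : ∀ i ∈ T, ∃ j : Fin t, b j = a i := by
      intro i hi
      simpa [hT_def, Set.mem_range] using (Finset.mem_filter.mp hi).2
    choose f hf using this
    have : T.card ≤ (Finset.univ : Finset (Fin t)).card := by
      apply Finset.card_le_card_of_injOn (fun i => if hi : i ∈ T then f i hi else ⟨0, ht1⟩)
        (fun _ _ => Finset.mem_univ _)
      intro i hi j hj hij
      simp only [Finset.mem_coe] at hi hj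
      simp only [dif_pos hi, dif_pos hj] at hij
      apply ha_inj
      rw [← hf i hi, ← hf j hj, hij]
    simpa using this
  have hcompl : h - t ≤ Tᶜ.card := by
    have := Finset.card_compl T
    simp only [Fintype.card_fin] at this
    omega
  obtain ⟨U, hUsub, hUcard⟩ := Finset.exists_subset_card_eq hcompl
  -- embedding e : Fin (h-t) → Fin h avoiding range b
  set e : Fin (h - t) → Fin h := fun k => ((U.equivFinOfCardEq hUcard).symm k : Fin h) with he_def
  have he_inj : Function.Injective e := by
    intro k1 k2 hk
    have := (U.equivFinOfCardEq hUcard).symm.injective (Subtype.ext hk)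
    exact this
  have he_not : ∀ k, a (e k) ∉ Set.range b := by
    intro k
    have hU : e k ∈ U := ((U.equivFinOfCardEq hUcard).symm k).2
    have : e k ∈ Tᶜ := hUsub hU
    simpa [hT_def] using Finset.mem_compl.mp this
  have hc' : t + (h - t) = h := by omega
  set ψ : Fin h ≃ (Fin t ⊕ Fin (h - t)) := (finCongr hc'.symm).trans finSumFinEquiv.symm
    with hψ_def
  set E : Finset (Fin h) := Finset.univ.image e with hE_def
  set l2 : Fin h → F := fun i => if i ∈ E then (1 + c) * l i else l i with hl2_def
  set b2 : Fin h → (Fin n → F) := fun i => Sum.elim b (fun k => a (e k)) (ψ i) with hb2_def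
  set m2 : Fin h → F := fun i => Sum.elim mc (fun k => c * l (e k)) (ψ i) with hm2_def
  have hb2_inj : Function.Injective b2 := by
    have helim : Function.Injective (Sum.elim b (fun k => a (e k))) := by
      rintro (j1 | k1) (j2 | k2) hs
      · simp only [Sum.elim_inl] at hs; exact congrArg Sum.inl (hb_inj hs)
      · exact absurd ⟨j1, hs⟩ (he_not k2)
      · exact absurd ⟨j2, hs.symm⟩ (he_not k1)
      · simp only [Sum.elim_inr] at hs
        exact congrArg Sum.inr (he_inj (ha_inj hs))
    exact fun i1 i2 hi => ψ.injective (helim hi)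
  have hb2A : ∀ i, b2 i ∈ A := by
    intro i
    rcases hs : ψ i with j | k <;> simp [hb2_def, hs, hbA, haA]
  have hl2 : ∀ i, l2 i ≠ 0 := by
    intro i
    simp only [hl2_def]
    split
    · exact mul_ne_zero h1c (hl i)
    · exact hl i
  have hm2 : ∀ i, m2 i ≠ 0 := by
    intro i
    rcases hs : ψ i with j | k <;> simp [hm2_def, hs, hm, mul_ne_zero hc0 (hl _)]
  -- the sums agree
  have hsum : (∑ i, l2 i • a i) = ∑ i, m2 i • b2 i := by
    have hS1 : (∑ i, l2 i • a i)
        = (∑ i, l i • a i) + ∑ k, (c * l (e k)) • a (e k) := by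
      have : ∀ i, l2 i • a i = l i • a i + (if i ∈ E then (c * l i) • a i else 0) := by
        intro i
        by_cases hi : i ∈ E
        · simp only [hl2_def, if_pos hi]
          rw [show (1 + c) * l i = l i + c * l i by ring, add_smul]
        · simp [hl2_def, hi]
      rw [Finset.sum_congr rfl (fun i _ => this i), Finset.sum_add_distrib]
      congr 1
      rw [Finset.sum_ite_mem, Finset.univ_inter, hE_def,
        Finset.sum_image (fun x _ y _ hxy => he_inj hxy)]
    have hS2 : (∑ i, m2 i • b2 i)
        = (∑ j, mc j • b j) + ∑ k, (c * l (e k)) • a (e k) := by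
      have := Fintype.sum_equiv ψ (fun i => m2 i • b2 i)
        (fun s => (Sum.elim mc (fun k => c * l (e k)) s) •
          (Sum.elim b (fun k => a (e k)) s)) (fun i => rfl)
      rw [this, Fintype.sum_sum_type]
      simp
    rw [hS1, hS2, hvb]
  obtain ⟨σ, hσb, hσm⟩ := hA a b2 l2 m2 ha_inj hb2_inj haA hb2A hl2 hm2 hsum
  -- derive contradiction at index e k0
  have hht : 0 < h - t := by omega
  set k0 : Fin (h - t) := ⟨0, hht⟩ with hk0
  set i0 : Fin h := e k0 with hi0
  have hb2i0 : b2 (σ i0) = a i0 := hσb i0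
  rcases hs : ψ (σ i0) with j | k
  · have : b j = a (e k0) := by
      rw [← hb2i0]; simp [hb2_def, hs]
    exact he_not k0 ⟨j, this⟩
  · have hk : k = k0 := by
      have : a (e k) = a (e k0) := by
        rw [← hb2i0]; simp [hb2_def, hs]
      exact he_inj (ha_inj this)
    have hmval : m2 (σ i0) = c * l (e k0) := by
      simp [hm2_def, hs, hk]
    have hlval : l2 i0 = (1 + c) * l i0 := by
      have : i0 ∈ E := Finset.mem_image.mpr ⟨k0, Finset.mem_univ _, rfl⟩
      simp [hl2_def, this]
    have heq : c * l i0 = (1 + c) * l i0 := by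
      rw [← hlval, ← hσm i0, hmval, hi0]
    have : l i0 = 0 := by linear_combination -heq
    exact hl i0 this
end

section
/- Let A be an S_h-linear set in a finite vector space V of dimension r over F_q, where 2h < r ≤ |A|. Then A is an S_j-linear set for every j with 1 ≤ j ≤ h-1. -/
theorem stmt_7 {F V : Type*} [Field F] [Fintype F] [AddCommGroup V] [Module F V]
    [FiniteDimensional F V] (A : Set V) (h r : ℕ)
    (hr : Module.finrank F V = r) (h1 : 2 * h < r) (h2 : r ≤ A.ncard)
    (hA : IsShLinearSet F A h) :
    ∀ j : ℕ, 1 ≤ j → j ≤ h - 1 → IsShLinearSet F A j := by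
  intro j hj1 hjh
  have hjle : j ≤ h := by omega
  have hV : Finite V := Module.finite_of_finite F
  intro a b l m ha hb haA hbA hl hm hsum
  -- fresh elements
  set S : Set V := A \ (Set.range a ∪ Set.range b) with hSdef
  have hra : (Set.range a).ncard ≤ j := by
    rw [← Set.image_univ]
    calc (a '' Set.univ).ncard ≤ (Set.univ : Set (Fin j)).ncard := Set.ncard_image_le (Set.finite_univ)
    _ = j := by rw [Set.ncard_univ]; simp
  have hrb : (Set.range b).ncard ≤ j := by
    rw [← Set.image_univ]
    calc (b '' Set.univ).ncard ≤ (Set.univ : Set (Fin j)).ncard := Set.ncard_image_le (Set.finite_univ)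
    _ = j := by rw [Set.ncard_univ]; simp
  have hcard : h - j ≤ S.ncard := by
    have hsub : A ⊆ S ∪ (Set.range a ∪ Set.range b) := by
      intro x hx
      by_cases hx2 : x ∈ Set.range a ∪ Set.range b
      · exact Set.mem_union_right _ hx2
      · exact Set.mem_union_left _ ⟨hx, hx2⟩
    have h3 : A.ncard ≤ S.ncard + ((Set.range a).ncard + (Set.range b).ncard) := by
      calc A.ncard ≤ (S ∪ (Set.range a ∪ Set.range b)).ncard :=
            Set.ncard_le_ncard hsub (Set.Finite.union (Set.toFinite _) (Set.toFinite _))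
      _ ≤ S.ncard + (Set.range a ∪ Set.range b).ncard := Set.ncard_union_le _ _
      _ ≤ S.ncard + ((Set.range a).ncard + (Set.range b).ncard) := by
            have := Set.ncard_union_le (Set.range a) (Set.range b); omega
    omega
  obtain ⟨T, hTS, hTcard⟩ := Set.exists_subset_card_eq hcard
  have hTfin : T.Finite := Set.toFinite T
  have hTc : hTfin.toFinset.card = h - j := by
    rw [← Set.ncard_eq_toFinset_card T hTfin]; exact hTcard
  let e : Fin (h - j) ≃ hTfin.toFinset := (hTfin.toFinset.equivFinOfCardEq hTc).symm
  set c : Fin (h - j) → V := fun k => (e k : V) with hcdef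
  have hc : Function.Injective c := fun k k' hkk' => e.injective (Subtype.ext hkk')
  have hcT : ∀ k, c k ∈ T := fun k => by
    have := (e k).2; rwa [Set.Finite.mem_toFinset] at this
  have hcS : ∀ k, c k ∈ S := fun k => hTS (hcT k)
  have hcA : ∀ k, c k ∈ A := fun k => (hcS k).1
  have hcna : ∀ k, c k ∉ Set.range a := fun k hk => (hcS k).2 (Set.mem_union_left _ hk)
  have hcnb : ∀ k, c k ∉ Set.range b := fun k hk => (hcS k).2 (Set.mem_union_right _ hk)
  -- build the extended tuples
  have hsplit : j + (h - j) = h := by omega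
  let E : Fin j ⊕ Fin (h - j) ≃ Fin h := finSumFinEquiv.trans (finCongr hsplit)
  set A' : Fin h → V := fun i => Sum.elim a c (E.symm i) with hA'def
  set B' : Fin h → V := fun i => Sum.elim b c (E.symm i) with hB'def
  set L' : Fin h → F := fun i => Sum.elim l (fun _ => 1) (E.symm i) with hL'def
  set M' : Fin h → F := fun i => Sum.elim m (fun _ => 1) (E.symm i) with hM'def
  have hinjac : Function.Injective (Sum.elim a c) := by
    rintro (i | k) (i' | k') hii'
    · exact congrArg Sum.inl (ha hii')
    · exact absurd ⟨i, hii'⟩ (hcna k')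
    · exact absurd ⟨i', hii'.symm⟩ (hcna k)
    · exact congrArg Sum.inr (hc hii')
  have hinjbc : Function.Injective (Sum.elim b c) := by
    rintro (i | k) (i' | k') hii'
    · exact congrArg Sum.inl (hb hii')
    · exact absurd ⟨i, hii'⟩ (hcnb k')
    · exact absurd ⟨i', hii'.symm⟩ (hcnb k)
    · exact congrArg Sum.inr (hc hii')
  have hsumA : (∑ i, L' i • A' i) = (∑ i, l i • a i) + ∑ k, (1 : F) • c k := by
    rw [show (∑ i, L' i • A' i) =
        ∑ s, Sum.elim l (fun _ => (1:F)) s • Sum.elim a c s from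
      (Equiv.sum_comp E.symm (fun s => Sum.elim l (fun _ => (1:F)) s • Sum.elim a c s)).symm ▸ rfl]
    rw [Fintype.sum_sum_type]
    rfl
  have hsumB : (∑ i, M' i • B' i) = (∑ i, m i • b i) + ∑ k, (1 : F) • c k := by
    rw [show (∑ i, M' i • B' i) =
        ∑ s, Sum.elim m (fun _ => (1:F)) s • Sum.elim b c s from
      (Equiv.sum_comp E.symm (fun s => Sum.elim m (fun _ => (1:F)) s • Sum.elim b c s)).symm ▸ rfl]
    rw [Fintype.sum_sum_type]
    rfl
  have hA'A : ∀ i, A' i ∈ A := by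
    intro i
    rcases hs : E.symm i with s | k
    · simpa [hA'def, hs] using haA s
    · simpa [hA'def, hs] using hcA k
  have hB'A : ∀ i, B' i ∈ A := by
    intro i
    rcases hs : E.symm i with s | k
    · simpa [hB'def, hs] using hbA s
    · simpa [hB'def, hs] using hcA k
  have hL' : ∀ i, L' i ≠ 0 := by
    intro i
    rcases hs : E.symm i with s | k
    · simpa [hL'def, hs] using hl s
    · simp [hL'def, hs]
  have hM' : ∀ i, M' i ≠ 0 := by
    intro i
    rcases hs : E.symm i with s | k
    · simpa [hM'def, hs] using hm s
    · simp [hM'def, hs]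
  obtain ⟨σ, hσb, hσm⟩ := hA A' B' L' M'
    (hinjac.comp E.symm.injective) (hinjbc.comp E.symm.injective)
    hA'A hB'A hL' hM' (by rw [hsumA, hsumB, hsum])
  -- σ maps first block to first block
  have hstep : ∀ i : Fin j, ∃ i' : Fin j, E.symm (σ (E (Sum.inl i))) = Sum.inl i' := by
    intro i
    have key : Sum.elim b c (E.symm (σ (E (Sum.inl i)))) = a i := by
      have := hσb (E (Sum.inl i))
      simpa [hB'def, hA'def] using this
    rcases hs : E.symm (σ (E (Sum.inl i))) with i' | k
    · exact ⟨i', rfl⟩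
    · rw [hs] at key
      exact absurd ⟨i, key.symm⟩ (hcna k)
  choose τ hτ using hstep
  have hbτ : ∀ i, b (τ i) = a i := by
    intro i
    have := hσb (E (Sum.inl i))
    simpa [hB'def, hA'def, hτ i] using this
  have hmτ : ∀ i, m (τ i) = l i := by
    intro i
    have := hσm (E (Sum.inl i))
    simpa [hM'def, hL'def, hτ i] using this
  have hτinj : Function.Injective τ := by
    intro i i' hii'
    have h1' : E.symm (σ (E (Sum.inl i))) = E.symm (σ (E (Sum.inl i'))) := by
      rw [hτ i, hτ i', hii']
    have h2' := E.injective (σ.injective (E.symm.injective h1'))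
    exact Sum.inl_injective h2'
  have hτbij : Function.Bijective τ := (Finite.injective_iff_bijective).mp hτinj
  exact ⟨Equiv.ofBijective τ hτbij, hbτ, hmτ⟩
end

section
/- Let A be an S_h-linear set in F_q^r with 0 ∈ A, where 2h < r ≤ |A|. Then every subset of A consisting of 2h nonzero elements is linearly independent over F_q. -/
open Finset

lemma sh_finset {F : Type*} [Field F] {V : Type*} [AddCommGroup V] [Module F V]
    {A : Set V} {h : ℕ} (hA : IsShLinearSet F A h)
    {S S' : Finset V} (hS : S.card = h) (hS' : S'.card = h)
    (hSA : ↑S ⊆ A) (hS'A : ↑S' ⊆ A)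
    {l m : V → F} (hl : ∀ x ∈ S, l x ≠ 0) (hm : ∀ x ∈ S', m x ≠ 0)
    (heq : ∑ x ∈ S, l x • x = ∑ x ∈ S', m x • x) : S = S' := by
  classical
  let e := S.equivFinOfCardEq hS
  let e' := S'.equivFinOfCardEq hS'
  set a : Fin h → V := fun i => (e.symm i : V) with ha_def
  set b : Fin h → V := fun i => (e'.symm i : V) with hb_def
  have ha : Function.Injective a := Subtype.val_injective.comp e.symm.injective
  have hb : Function.Injective b := Subtype.val_injective.comp e'.symm.injective
  have hsa : ∑ i, l (a i) • a i = ∑ x ∈ S, l x • x := by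
    rw [← Finset.sum_coe_sort S (fun x => l x • x)]
    exact Fintype.sum_equiv e.symm _ _ (fun i => rfl)
  have hsb : ∑ i, m (b i) • b i = ∑ x ∈ S', m x • x := by
    rw [← Finset.sum_coe_sort S' (fun x => m x • x)]
    exact Fintype.sum_equiv e'.symm _ _ (fun i => rfl)
  obtain ⟨σ, hσ, -⟩ := hA a b (fun i => l (a i)) (fun i => m (b i)) ha hb
    (fun i => hSA (e.symm i).2) (fun i => hS'A (e'.symm i).2)
    (fun i => hl _ (e.symm i).2) (fun i => hm _ (e'.symm i).2)
    (by rw [hsa, hsb, heq])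
  have hab : a = b ∘ σ := funext fun i => (hσ i).symm
  have hra : Set.range a = ↑S := by
    have : a = (Subtype.val : S → V) ∘ e.symm := rfl
    rw [this, Set.range_comp, e.symm.range_eq_univ, Set.image_univ, Subtype.range_coe]
  have hrb : Set.range b = ↑S' := by
    have : b = (Subtype.val : S' → V) ∘ e'.symm := rfl
    rw [this, Set.range_comp, e'.symm.range_eq_univ, Set.image_univ, Subtype.range_coe]
  have : (↑S : Set V) = ↑S' := by
    rw [← hra, ← hrb, hab, Set.range_comp, σ.range_eq_univ, Set.image_univ]
  exact Finset.coe_injective this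


lemma sh_no_split {F : Type*} [Field F] {V : Type*} [AddCommGroup V] [Module F V]
    {A : Set V} {h : ℕ} (hA : IsShLinearSet F A h)
    {S1 S2 T : Finset V} {c1 c2 : V → F}
    (hS1A : ↑S1 ⊆ A) (hS2A : ↑S2 ⊆ A) (hTA : ↑T ⊆ A)
    (d1T : Disjoint S1 T) (d2T : Disjoint S2 T) (d12 : Disjoint S1 S2)
    (hcard : S1.card = S2.card) (hsum : S1.card + T.card = h)
    (hc1 : ∀ x ∈ S1, c1 x ≠ 0) (hc2 : ∀ x ∈ S2, c2 x ≠ 0)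
    (heq : ∑ x ∈ S1, c1 x • x = ∑ x ∈ S2, c2 x • x)
    (hne : S1.Nonempty) : False := by
  classical
  set l : V → F := fun x => if x ∈ S1 then c1 x else 1 with hl_def
  set m : V → F := fun x => if x ∈ S2 then c2 x else 1 with hm_def
  have key : S1 ∪ T = S2 ∪ T := by
    refine sh_finset hA (l := l) (m := m) ?_ ?_ ?_ ?_ ?_ ?_ ?_
    · rw [card_union_of_disjoint d1T]; exact hsum
    · rw [card_union_of_disjoint d2T, ← hcard]; exact hsum
    · rw [coe_union]; exact Set.union_subset hS1A hTA
    · rw [coe_union]; exact Set.union_subset hS2A hTA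
    · intro x hx
      rcases mem_union.mp hx with hx1 | hxT
      · rw [hl_def]; simp only [if_pos hx1]; exact hc1 x hx1
      · have : x ∉ S1 := fun hc => (d1T.forall_ne_finset hc hxT) rfl
        rw [hl_def]; simp only [if_neg this]; exact one_ne_zero
    · intro x hx
      rcases mem_union.mp hx with hx1 | hxT
      · rw [hm_def]; simp only [if_pos hx1]; exact hc2 x hx1
      · have : x ∉ S2 := fun hc => (d2T.forall_ne_finset hc hxT) rfl
        rw [hm_def]; simp only [if_neg this]; exact one_ne_zero
    · rw [sum_union d1T, sum_union d2T]
      have e1 : ∑ x ∈ S1, l x • x = ∑ x ∈ S1, c1 x • x :=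
        Finset.sum_congr rfl fun x hx => by rw [hl_def]; simp [if_pos hx]
      have e2 : ∑ x ∈ S2, m x • x = ∑ x ∈ S2, c2 x • x :=
        Finset.sum_congr rfl fun x hx => by rw [hm_def]; simp [if_pos hx]
      have e3 : ∑ x ∈ T, l x • x = ∑ x ∈ T, m x • x := by
        refine Finset.sum_congr rfl fun x hx => ?_
        have h1 : x ∉ S1 := fun hc => (d1T.forall_ne_finset hc hx) rfl
        have h2 : x ∉ S2 := fun hc => (d2T.forall_ne_finset hc hx) rfl
        rw [hl_def, hm_def]; simp [if_neg h1, if_neg h2]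
      rw [e1, e2, e3, heq]
  obtain ⟨x0, hx0⟩ := hne
  have : x0 ∈ S2 ∪ T := key ▸ mem_union_left T hx0
  rcases mem_union.mp this with h2' | hT'
  · exact (d12.forall_ne_finset hx0 h2') rfl
  · exact (d1T.forall_ne_finset hx0 hT') rfl


theorem stmt_9 {F : Type*} [Field F] [Fintype F] {r : ℕ} (A : Set (Fin r → F)) (h : ℕ)
    (h0 : (0 : Fin r → F) ∈ A) (h1 : 2 * h < r) (h2 : r ≤ A.ncard)
    (hA : IsShLinearSet F A h) :
    ∀ B : Set (Fin r → F), B ⊆ A → B.ncard = 2 * h → (∀ x ∈ B, x ≠ 0) →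
      LinearIndependent F (fun x : B => (x : Fin r → F)) := by
  classical
  intro B hBA hBcard hB0
  by_contra hdep
  haveI : Fintype B := B.toFinite.fintype
  rw [Fintype.not_linearIndependent_iff] at hdep
  obtain ⟨g, hgsum, i0, hgi0⟩ := hdep
  set c : (Fin r → F) → F := fun x => if hx : x ∈ B then g ⟨x, hx⟩ else 0 with hc_def
  set Bf : Finset (Fin r → F) := B.toFinset with hBf_def
  set S : Finset (Fin r → F) := Bf.filter (fun x => c x ≠ 0) with hS_def
  have hSB : ∀ x ∈ S, x ∈ B := fun x hx => by
    have := (Finset.mem_filter.mp hx).1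
    rwa [hBf_def, Set.mem_toFinset] at this
  have hSc : ∀ x ∈ S, c x ≠ 0 := fun x hx => (Finset.mem_filter.mp hx).2
  have hS0 : (0 : Fin r → F) ∉ S := fun hx => hB0 0 (hSB 0 hx) rfl
  have hBfcard : Bf.card = 2 * h := by
    rw [hBf_def, ← Set.ncard_eq_toFinset_card']; exact hBcard
  have hScard : S.card ≤ 2 * h := hBfcard ▸ Finset.card_filter_le _ _
  have hSsum : ∑ x ∈ S, c x • x = 0 := by
    have hBfsum : ∑ x ∈ Bf, c x • x = 0 := by
      rw [Finset.sum_subtype Bf (fun x => Set.mem_toFinset) (fun x => c x • x)]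
      rw [← hgsum]
      refine Fintype.sum_congr _ _ fun i => ?_
      rw [hc_def]; simp only [dif_pos i.2]
    rw [hS_def, Finset.sum_filter_of_ne, hBfsum]
    intro x _ hne hcx
    exact hne (by rw [hcx, zero_smul])
  have hSne : S.Nonempty := by
    refine ⟨(i0 : Fin r → F), Finset.mem_filter.mpr ⟨?_, ?_⟩⟩
    · rw [hBf_def, Set.mem_toFinset]; exact i0.2
    · rw [hc_def]; simp only [dif_pos i0.2]
      rwa [Subtype.coe_eta]
  set k := S.card with hk_def
  have hk1 : 1 ≤ k := Finset.card_pos.mpr hSne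
  obtain ⟨S2, hS2sub, hS2card⟩ := Finset.exists_subset_card_eq (Nat.div_le_self k 2)
  set S1 := S \ S2 with hS1_def
  have hS1card : S1.card = k - k / 2 := by rw [hS1_def, Finset.card_sdiff_of_subset hS2sub, hS2card]
  have hS1sub : S1 ⊆ S := Finset.sdiff_subset
  -- S2' : pad S2 with 0 if k is odd
  set S2' : Finset (Fin r → F) := if k % 2 = 1 then insert 0 S2 else S2 with hS2'_def
  have h0S2 : (0 : Fin r → F) ∉ S2 := fun hx => hS0 (hS2sub hx)
  have hS2'card : S2'.card = k - k / 2 := by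
    rw [hS2'_def]
    rcases Nat.even_or_odd k with he | ho
    · rw [if_neg (by have := Nat.even_iff.mp he; omega : ¬ k % 2 = 1), hS2card]
      obtain ⟨m, hm⟩ := he; omega
    · rw [if_pos (Nat.odd_iff.mp ho), Finset.card_insert_of_notMem h0S2, hS2card]
      obtain ⟨m, hm⟩ := ho; omega
  set c2 : (Fin r → F) → F := fun x => if x ∈ S2 then -c x else 1 with hc2_def
  have hS2'sum : ∑ x ∈ S2', c2 x • x = ∑ x ∈ S2, (-c x) • x := by
    have hcong : ∑ x ∈ S2, c2 x • x = ∑ x ∈ S2, (-c x) • x :=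
      Finset.sum_congr rfl fun x hx => by rw [hc2_def]; simp [if_pos hx]
    rw [hS2'_def]
    rcases eq_or_ne (k % 2) 1 with ho | he
    · rw [if_pos ho, Finset.sum_insert h0S2, hcong, smul_zero, zero_add]
    · rw [if_neg he, hcong]
  have heqn : ∑ x ∈ S1, c x • x = ∑ x ∈ S2', c2 x • x := by
    rw [hS2'sum]
    have hsplit : S1 ∪ S2 = S := Finset.sdiff_union_of_subset hS2sub
    have hd : Disjoint S1 S2 := Finset.sdiff_disjoint
    have := hSsum
    rw [← hsplit, Finset.sum_union hd] at this
    have : ∑ x ∈ S1, c x • x = - ∑ x ∈ S2, c x • x := by linear_combination this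
    rw [this, ← Finset.sum_neg_distrib]
    exact Finset.sum_congr rfl fun x _ => by rw [neg_smul]
  -- find padding set T
  have hAfin : A.Finite := A.toFinite
  set Af : Finset (Fin r → F) := hAfin.toFinset with hAf_def
  have hAfcard : r ≤ Af.card := by
    rw [hAf_def, ← Set.ncard_eq_toFinset_card]; exact h2
  have hSAf : insert 0 S ⊆ Af := by
    intro x hx
    rw [hAf_def, Set.Finite.mem_toFinset]
    rcases Finset.mem_insert.mp hx with h' | h'
    · rw [h']; exact h0
    · exact hBA (hSB x h')
  have hbig : h - (k - k / 2) ≤ (Af \ insert 0 S).card := by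
    rw [Finset.card_sdiff_of_subset hSAf]
    have := Finset.card_insert_le (0 : Fin r → F) S
    omega
  obtain ⟨T, hTsub, hTcard⟩ := Finset.exists_subset_card_eq hbig
  have hTS : Disjoint T (insert 0 S) := by
    have hd : Disjoint (Af \ insert 0 S) (insert 0 S) := Finset.sdiff_disjoint
    exact hd.mono_left hTsub
  refine sh_no_split (A := A) hA (S1 := S1) (S2 := S2') (T := T) (c1 := c) (c2 := c2)
    ?_ ?_ ?_ ?_ ?_ ?_ ?_ ?_ ?_ ?_ heqn ?_
  · intro x hx
    exact hBA (hSB x (hS1sub (by exact_mod_cast hx)))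
  · intro x hx
    have hx' : x ∈ S2' := by exact_mod_cast hx
    have : x ∈ insert 0 S2 := by
      rw [hS2'_def] at hx'
      rcases eq_or_ne (k % 2) 1 with ho | he
      · rwa [if_pos ho] at hx'
      · rw [if_neg he] at hx'; exact Finset.mem_insert_of_mem hx'
    rcases Finset.mem_insert.mp this with h' | h'
    · rw [h']; exact h0
    · exact hBA (hSB x (hS2sub h'))
  · intro x hx
    have : x ∈ Af := (Finset.mem_sdiff.mp (hTsub (by exact_mod_cast hx))).1
    rw [hAf_def, Set.Finite.mem_toFinset] at this; exact this
  · -- Disjoint S1 T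
    refine Finset.disjoint_left.mpr fun x hx hxT => ?_
    have := Finset.disjoint_left.mp hTS hxT
    exact this (Finset.mem_insert_of_mem (hS1sub hx))
  · -- Disjoint S2' T
    refine Finset.disjoint_left.mpr fun x hx hxT => ?_
    have hx' : x ∈ insert 0 S := by
      rw [hS2'_def] at hx
      rcases eq_or_ne (k % 2) 1 with ho | he
      · rw [if_pos ho] at hx
        rcases Finset.mem_insert.mp hx with h' | h'
        · rw [h']; exact Finset.mem_insert_self _ _
        · exact Finset.mem_insert_of_mem (hS2sub h')
      · rw [if_neg he] at hx; exact Finset.mem_insert_of_mem (hS2sub hx)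
    exact Finset.disjoint_left.mp hTS hxT hx'
  · -- Disjoint S1 S2'
    refine Finset.disjoint_left.mpr fun x hx hx2 => ?_
    rw [hS2'_def] at hx2
    have hxS2 : x ∈ insert 0 S2 := by
      rcases eq_or_ne (k % 2) 1 with ho | he
      · rwa [if_pos ho] at hx2
      · rw [if_neg he] at hx2; exact Finset.mem_insert_of_mem hx2
    rcases Finset.mem_insert.mp hxS2 with h' | h'
    · exact hS0 (hS1sub hx |> fun hh => h' ▸ hh)
    · exact Finset.disjoint_left.mp Finset.sdiff_disjoint hx h'
  · rw [hS1card, hS2'card]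
  · rw [hS1card, hTcard]; omega
  · exact fun x hx => hSc x (hS1sub hx)
  · intro x hx
    rw [hc2_def]
    by_cases h' : x ∈ S2
    · simp only [if_pos h']
      exact neg_ne_zero.mpr (hSc x (hS2sub h'))
    · simp only [if_neg h']; exact one_ne_zero
  · rw [← Finset.card_pos, hS1card]; omega
end

section
/- Let A be a maximal S_h-linear set in F_q^r with 2h < r ≤ |A|. Then A contains a basis of F_q^r over F_q; in particular, A spans F_q^r. -/
theorem aux_span {F : Type*} [Field F] [Fintype F] {r : ℕ} (A : Set (Fin r → F)) (h : ℕ)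
    (h1 : 2 * h < r) (h2 : r ≤ A.ncard)
    (hA : IsShLinearSet F A h)
    (hmax : ∀ B : Set (Fin r → F), IsShLinearSet F B h → A ⊆ B → A = B) :
    Submodule.span F A = ⊤ := by
  by_contra hne
  obtain ⟨v, hv⟩ : ∃ v, v ∉ Submodule.span F A := by
    by_contra h'
    push_neg at h'
    exact hne (Submodule.eq_top_iff'.2 h')
  set π := (Submodule.span F A).mkQ with hπdef
  have hπA : ∀ x ∈ A, π x = 0 := fun x hx =>
    (Submodule.Quotient.mk_eq_zero _).2 (Submodule.subset_span hx)
  have hπv : π v ≠ 0 := fun hh => hv ((Submodule.Quotient.mk_eq_zero _).1 hh)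
  have hvA : v ∉ A := fun hh => hv (Submodule.subset_span hh)
  have proj : ∀ (a : Fin h → Fin r → F) (l : Fin h → F), Function.Injective a →
      (∀ i, a i ∈ insert v A) → ∀ k, a k = v →
      π (∑ i, l i • a i) = l k • π v := by
    intro a l hinj haA k hk
    rw [map_sum]
    simp_rw [map_smul]
    rw [Finset.sum_eq_single k]
    · rw [hk]
    · intro i _ hik
      have : a i ∈ A := by
        rcases Set.mem_insert_iff.1 (haA i) with h' | h'
        · exact absurd (hinj (h'.trans hk.symm)) hik
        · exact h'
      rw [hπA _ this, smul_zero]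
    · exact fun h' => absurd (Finset.mem_univ k) h'
  have proj0 : ∀ (a : Fin h → Fin r → F) (l : Fin h → F),
      (∀ i, a i ∈ insert v A) → (∀ k, a k ≠ v) →
      π (∑ i, l i • a i) = 0 := by
    intro a l haA hk
    rw [map_sum]
    apply Finset.sum_eq_zero
    intro i _
    have : a i ∈ A := (Set.mem_insert_iff.1 (haA i)).resolve_left (hk i)
    rw [map_smul, hπA _ this, smul_zero]
  have hnew : IsShLinearSet F (insert v A) h := by
    intro a b l m hai hbi haA hbA hl hm hsum
    by_cases hva : ∃ k, a k = v
    · obtain ⟨k, hk⟩ := hva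
      by_cases hvb : ∃ j, b j = v
      · obtain ⟨j, hj⟩ := hvb
        have hlk : l k = m j := by
          have e1 := proj a l hai haA k hk
          have e2 := proj b m hbi hbA j hj
          have h3 : (l k - m j) • π v = 0 := by
            rw [sub_smul, ← e1, ← e2, hsum, sub_self]
          rcases smul_eq_zero.1 h3 with h4 | h4
          · exact sub_eq_zero.1 h4
          · exact absurd h4 hπv
        -- pick c ∈ A avoiding both ranges
        obtain ⟨c, hcA, hc⟩ : ∃ c ∈ A, c ∉ Set.range a ∪ Set.range b := by
          have hra : (Set.range a).ncard ≤ h := by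
            rw [← Set.image_univ]
            exact le_trans (Set.ncard_image_le Set.finite_univ)
              (by simp [Set.ncard_univ])
          have hrb : (Set.range b).ncard ≤ h := by
            rw [← Set.image_univ]
            exact le_trans (Set.ncard_image_le Set.finite_univ)
              (by simp [Set.ncard_univ])
          by_contra hcon
          push_neg at hcon
          have hsub : A ⊆ Set.range a ∪ Set.range b := hcon
          have hfin : (Set.range a ∪ Set.range b).Finite :=
            (Set.finite_range a).union (Set.finite_range b)
          have := Set.ncard_le_ncard hsub hfin
          have := Set.ncard_union_le (Set.range a) (Set.range b)
          omega
        have hca : ∀ i, a i ≠ c := fun i hi => hc (Or.inl ⟨i, hi⟩)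
        have hcb : ∀ i, b i ≠ c := fun i hi => hc (Or.inr ⟨i, hi⟩)
        -- updated families
        have key : ∀ (a : Fin h → Fin r → F) (l : Fin h → F) (k : Fin h),
            ∑ i, (Function.update l k (1:F)) i • (Function.update a k c) i
              = c + ∑ i ∈ Finset.univ.erase k, l i • a i := by
          intro a l k
          have heq : (fun i => Function.update l k (1:F) i • Function.update a k c i)
              = Function.update (fun i => l i • a i) k ((1:F) • c) := by
            funext i
            rcases eq_or_ne i k with rfl | hik
            · simp
            · simp [Function.update_of_ne hik]
          rw [heq, Finset.sum_update_of_mem (Finset.mem_univ k), one_smul,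
            ← Finset.erase_eq]
        have split : ∀ (a : Fin h → Fin r → F) (l : Fin h → F) (k : Fin h),
            ∑ i, l i • a i = l k • a k + ∑ i ∈ Finset.univ.erase k, l i • a i :=
          fun a l k => (Finset.add_sum_erase _ _ (Finset.mem_univ k)).symm
        have hS : ∑ i ∈ Finset.univ.erase k, l i • a i
            = ∑ i ∈ Finset.univ.erase j, m i • b i := by
          have e1 := split a l k
          have e2 := split b m j
          rw [hk] at e1; rw [hj] at e2
          rw [e1, e2, hlk] at hsum
          exact add_left_cancel hsum
        have hsum' : ∑ i, (Function.update l k (1:F)) i • (Function.update a k c) i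
            = ∑ i, (Function.update m j (1:F)) i • (Function.update b j c) i := by
          rw [key, key, hS]
        -- hypotheses for hA
        have hvrest : ∀ i, i ≠ k → a i ∈ A := by
          intro i hik
          rcases Set.mem_insert_iff.1 (haA i) with h' | h'
          · exact absurd (hai (h'.trans hk.symm)) hik
          · exact h'
        have hvrestb : ∀ i, i ≠ j → b i ∈ A := by
          intro i hij
          rcases Set.mem_insert_iff.1 (hbA i) with h' | h'
          · exact absurd (hbi (h'.trans hj.symm)) hij
          · exact h'
        have hai' : Function.Injective (Function.update a k c) := by
          intro x y hxy
          by_cases hx : x = k <;> by_cases hy : y = k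
          · rw [hx, hy]
          · rw [hx, Function.update_self, Function.update_of_ne hy] at hxy
            exact absurd hxy.symm (hca y)
          · rw [hy, Function.update_self, Function.update_of_ne hx] at hxy
            exact absurd hxy (hca x)
          · rw [Function.update_of_ne hx, Function.update_of_ne hy] at hxy
            exact hai hxy
        have hbi' : Function.Injective (Function.update b j c) := by
          intro x y hxy
          by_cases hx : x = j <;> by_cases hy : y = j
          · rw [hx, hy]
          · rw [hx, Function.update_self, Function.update_of_ne hy] at hxy
            exact absurd hxy.symm (hcb y)
          · rw [hy, Function.update_self, Function.update_of_ne hx] at hxy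
            exact absurd hxy (hcb x)
          · rw [Function.update_of_ne hx, Function.update_of_ne hy] at hxy
            exact hbi hxy
        have haA' : ∀ i, Function.update a k c i ∈ A := by
          intro i
          rcases eq_or_ne i k with rfl | hik
          · rw [Function.update_self]; exact hcA
          · rw [Function.update_of_ne hik]; exact hvrest i hik
        have hbA' : ∀ i, Function.update b j c i ∈ A := by
          intro i
          rcases eq_or_ne i j with rfl | hij
          · rw [Function.update_self]; exact hcA
          · rw [Function.update_of_ne hij]; exact hvrestb i hij
        have hl' : ∀ i, Function.update l k (1:F) i ≠ 0 := by
          intro i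
          rcases eq_or_ne i k with rfl | hik
          · rw [Function.update_self]; exact one_ne_zero
          · rw [Function.update_of_ne hik]; exact hl i
        have hm' : ∀ i, Function.update m j (1:F) i ≠ 0 := by
          intro i
          rcases eq_or_ne i j with rfl | hij
          · rw [Function.update_self]; exact one_ne_zero
          · rw [Function.update_of_ne hij]; exact hm i
        obtain ⟨σ, hσb, hσm⟩ := hA _ _ _ _ hai' hbi' haA' hbA' hl' hm' hsum'
        have hσk : σ k = j := by
          by_contra hne'
          have h' := hσb k
          rw [Function.update_self, Function.update_of_ne hne'] at h'
          exact hcb (σ k) h'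
        have hσne : ∀ i, i ≠ k → σ i ≠ j := by
          intro i hik h'
          have h'' := hσb i
          rw [h', Function.update_self, Function.update_of_ne hik] at h''
          exact hca i h''.symm
        refine ⟨σ, fun i => ?_, fun i => ?_⟩
        · rcases eq_or_ne i k with rfl | hik
          · rw [hσk, hj, hk]
          · have h'' := hσb i
            rwa [Function.update_of_ne (hσne i hik), Function.update_of_ne hik] at h''
        · rcases eq_or_ne i k with rfl | hik
          · rw [hσk]; exact hlk.symm
          · have h'' := hσm i
            rwa [Function.update_of_ne (hσne i hik), Function.update_of_ne hik] at h''
      · push_neg at hvb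
        exfalso
        have e1 := proj a l hai haA k hk
        have e2 := proj0 b m hbA hvb
        rw [hsum, e2] at e1
        rcases smul_eq_zero.1 e1.symm with h4 | h4
        · exact hl k h4
        · exact hπv h4
    · push_neg at hva
      by_cases hvb : ∃ j, b j = v
      · obtain ⟨j, hj⟩ := hvb
        exfalso
        have e2 := proj b m hbi hbA j hj
        have e1 := proj0 a l haA hva
        rw [hsum, e2] at e1
        rcases smul_eq_zero.1 e1 with h4 | h4
        · exact hm j h4
        · exact hπv h4
      · push_neg at hvb
        exact hA a b l m hai hbi
          (fun i => (Set.mem_insert_iff.1 (haA i)).resolve_left (hva i))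
          (fun i => (Set.mem_insert_iff.1 (hbA i)).resolve_left (hvb i))
          hl hm hsum
  have hAeq := hmax _ hnew (Set.subset_insert v A)
  exact hvA (hAeq ▸ Set.mem_insert v A)

theorem stmt_11 {F : Type*} [Field F] [Fintype F] {r : ℕ} (A : Set (Fin r → F)) (h : ℕ)
    (h1 : 2 * h < r) (h2 : r ≤ A.ncard)
    (hA : IsShLinearSet F A h)
    (hmax : ∀ B : Set (Fin r → F), IsShLinearSet F B h → A ⊆ B → A = B) :
    (∃ B : Set (Fin r → F), B ⊆ A ∧
      LinearIndependent F (fun x : B => (x : Fin r → F)) ∧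
      Submodule.span F B = ⊤) ∧
    Submodule.span F A = ⊤ := by
  have hspan := aux_span A h h1 h2 hA hmax
  obtain ⟨B, hBA, hBspan, hBindep⟩ := exists_linearIndependent F A
  exact ⟨⟨B, hBA, hBindep, hBspan.trans hspan⟩, hspan⟩
end

section
/- Let h ≥ 2 and n > r ≥ 2h. If there exists an S_h-linear set with n+1 elements in F_q^r, then there exists a linear code over F_q of length n, dimension n - r, and minimum distance at least 2h+1. -/
section Helpers

variable {F : Type*} [Field F] {V : Type*} [AddCommGroup V] [Module F V] {A : Set V} {h : ℕ}

/-- Applying the `S_h` property to two `h`-element finsets with coefficient functions. -/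
lemma Sh_apply (hA : IsShLinearSet F A h) (L R : Finset V)
    (hLA : ↑L ⊆ A) (hRA : ↑R ⊆ A) (hLc : L.card = h) (hRc : R.card = h)
    (l m : V → F) (hl : ∀ y ∈ L, l y ≠ 0) (hm : ∀ y ∈ R, m y ≠ 0)
    (hsum : ∑ y ∈ L, l y • y = ∑ y ∈ R, m y • y) :
    ∀ y ∈ L, y ∈ R ∧ m y = l y := by
  classical
  let eL : Fin h ≃ ↥L := (finCongr hLc.symm).trans L.equivFin.symm
  let eR : Fin h ≃ ↥R := (finCongr hRc.symm).trans R.equivFin.symm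
  obtain ⟨σ, hσ1, hσ2⟩ := hA (fun i => ↑(eL i)) (fun i => ↑(eR i))
      (fun i => l ↑(eL i)) (fun i => m ↑(eR i))
      (Subtype.val_injective.comp eL.injective)
      (Subtype.val_injective.comp eR.injective)
      (fun i => hLA (eL i).2) (fun i => hRA (eR i).2)
      (fun i => hl _ (eL i).2) (fun i => hm _ (eR i).2)
      (by
        rw [← Finset.sum_coe_sort L (fun y => l y • y),
            ← Finset.sum_coe_sort R (fun y => m y • y)] at hsum
        rw [← Equiv.sum_comp eL (fun z : ↥L => l ↑z • (↑z : V)),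
            ← Equiv.sum_comp eR (fun z : ↥R => m ↑z • (↑z : V))] at hsum
        exact hsum)
  intro y hy
  have h1 := hσ1 (eL.symm ⟨y, hy⟩)
  have h2 := hσ2 (eL.symm ⟨y, hy⟩)
  rw [Equiv.apply_symm_apply] at h1 h2
  have h1' : (↑(eR (σ (eL.symm ⟨y, hy⟩))) : V) = y := h1
  refine ⟨h1' ▸ (eR (σ (eL.symm ⟨y, hy⟩))).2, by rw [← h2, h1']⟩

lemma exists_pads (Af T : Finset V) (hT : T ⊆ Af) (t : ℕ) (ht : t + T.card ≤ Af.card) :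
    ∃ P : Finset V, P ⊆ Af ∧ Disjoint P T ∧ P.card = t := by
  classical
  obtain ⟨P, hP, hPc⟩ := Finset.exists_subset_card_eq
    (show t ≤ (Af \ T).card by rw [Finset.card_sdiff_of_subset hT]; omega)
  refine ⟨P, hP.trans (Finset.sdiff_subset), Finset.disjoint_left.2 ?_, hPc⟩
  intro y hy hyT
  exact (Finset.mem_sdiff.1 (hP hy)).2 hyT

/-- No vanishing linear combination with an even number of terms `2s ≤ 2h`. -/
lemma Sh_even (hA : IsShLinearSet F A h) (hfin : A.Finite) (hAbig : 2 * h + 2 ≤ A.ncard)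
    {s : ℕ} (hs1 : 1 ≤ s) (hsh : s ≤ h) (T : Finset V) (hTA : ↑T ⊆ A)
    (hTc : T.card = 2 * s) (c : V → F) (hc : ∀ y ∈ T, c y ≠ 0)
    (hsum : ∑ y ∈ T, c y • y = 0) : False := by
  classical
  set Af := hfin.toFinset with hAfdef
  have hAfc : 2 * h + 2 ≤ Af.card := by
    rwa [Set.ncard_eq_toFinset_card _ hfin] at hAbig
  have hTAf : T ⊆ Af := fun y hy => hfin.mem_toFinset.2 (hTA hy)
  obtain ⟨T₁, hT₁, hT₁c⟩ := Finset.exists_subset_card_eq (show s ≤ T.card by omega)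
  set T₂ := T \ T₁ with hT₂def
  have hT₂c : T₂.card = s := by rw [hT₂def, Finset.card_sdiff_of_subset hT₁]; omega
  obtain ⟨P, hPAf, hPT, hPc⟩ := exists_pads Af T hTAf (h - s) (by omega)
  have hd1 : Disjoint T₁ P := (hPT.symm.mono_left hT₁)
  have hd2 : Disjoint T₂ P := (hPT.symm.mono_left (Finset.sdiff_subset))
  set L := T₁ ∪ P with hLdef
  set R := T₂ ∪ P with hRdef
  have hLc : L.card = h := by
    rw [hLdef, Finset.card_union_of_disjoint hd1, hT₁c, hPc]; omega
  have hRc : R.card = h := by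
    rw [hRdef, Finset.card_union_of_disjoint hd2, hT₂c, hPc]; omega
  have hLA : ↑L ⊆ A := by
    intro y hy
    rcases Finset.mem_union.1 hy with h' | h'
    · exact hTA (hT₁ h')
    · exact hfin.mem_toFinset.1 (hPAf h')
  have hRA : ↑R ⊆ A := by
    intro y hy
    rcases Finset.mem_union.1 hy with h' | h'
    · exact hTA (Finset.sdiff_subset h')
    · exact hfin.mem_toFinset.1 (hPAf h')
  set l : V → F := fun y => if y ∈ T₁ then c y else 1 with hldef
  set m : V → F := fun y => if y ∈ T₂ then -c y else 1 with hmdef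
  have hsplit : (∑ y ∈ T₂, c y • y) + (∑ y ∈ T₁, c y • y) = 0 := by
    rw [hT₂def, Finset.sum_sdiff hT₁]; exact hsum
  have key := Sh_apply hA L R hLA hRA hLc hRc l m
    (by
      intro y hy
      rw [hldef]
      by_cases hyT : y ∈ T₁
      · simpa [hyT] using hc y (hT₁ hyT)
      · simp [hyT])
    (by
      intro y hy
      rw [hmdef]
      by_cases hyT : y ∈ T₂
      · simpa [hyT] using hc y (Finset.sdiff_subset hyT)
      · simp [hyT])
    (by
      rw [hLdef, hRdef, Finset.sum_union hd1, Finset.sum_union hd2]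
      have e1 : ∑ y ∈ T₁, l y • y = ∑ y ∈ T₁, c y • y :=
        Finset.sum_congr rfl fun y hy => by rw [hldef]; simp [hy]
      have e2 : ∑ y ∈ T₂, m y • y = ∑ y ∈ T₂, (- c y) • y :=
        Finset.sum_congr rfl fun y hy => by rw [hmdef]; simp [hy]
      have e3 : ∑ y ∈ P, l y • y = ∑ y ∈ P, y :=
        Finset.sum_congr rfl fun y hy => by
          rw [hldef]
          simp [Finset.disjoint_left.1 hd1.symm hy]
      have e4 : ∑ y ∈ P, m y • y = ∑ y ∈ P, y :=
        Finset.sum_congr rfl fun y hy => by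
          rw [hmdef]
          simp [Finset.disjoint_left.1 hd2.symm hy]
      rw [e1, e2, e3, e4]
      rw [← sub_eq_zero, ← hsplit]
      simp only [neg_smul, Finset.sum_neg_distrib]
      abel)
  obtain ⟨x0, hx0⟩ := Finset.card_pos.1 (show 0 < T₁.card by omega)
  obtain ⟨hx0R, -⟩ := key x0 (Finset.mem_union_left _ hx0)
  rcases Finset.mem_union.1 hx0R with h' | h'
  · exact (Finset.mem_sdiff.1 h').2 hx0
  · exact Finset.disjoint_left.1 hPT h' (hT₁ hx0)

/-- No vanishing linear combination with an odd number of terms `2s+1 ≤ 2h-1`,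
provided the field has at least 3 elements. -/
lemma Sh_odd [Fintype F] (hA : IsShLinearSet F A h) (hfin : A.Finite)
    (hAbig : 2 * h + 2 ≤ A.ncard) (hF : 3 ≤ Fintype.card F)
    {s : ℕ} (hsh : s + 1 ≤ h) (T : Finset V) (hTA : ↑T ⊆ A)
    (hTc : T.card = 2 * s + 1) (c : V → F) (hc : ∀ y ∈ T, c y ≠ 0)
    (hsum : ∑ y ∈ T, c y • y = 0) : False := by
  classical
  set Af := hfin.toFinset with hAfdef
  have hAfc : 2 * h + 2 ≤ Af.card := by
    rwa [Set.ncard_eq_toFinset_card _ hfin] at hAbig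
  have hTAf : T ⊆ Af := fun y hy => hfin.mem_toFinset.2 (hTA hy)
  obtain ⟨x0, hx0T⟩ := Finset.card_pos.1 (show 0 < T.card by omega)
  obtain ⟨lam, hlam0, hlamd⟩ : ∃ lam : F, lam ≠ 0 ∧ lam ≠ c x0 := by
    by_contra hcon
    push_neg at hcon
    have hsub : (Finset.univ : Finset F) ⊆ {0, c x0} := by
      intro z _
      rcases eq_or_ne z 0 with rfl | hz
      · simp
      · simp [hcon z hz]
    have h1 := Finset.card_le_card hsub
    have h2 : ({0, c x0} : Finset F).card ≤ 2 :=
      (Finset.card_insert_le _ _).trans (by simp)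
    rw [Finset.card_univ] at h1
    omega
  have hT'T : T.erase x0 ⊆ T := Finset.erase_subset _ _
  have hT'c : (T.erase x0).card = 2 * s := by
    rw [Finset.card_erase_of_mem hx0T, hTc]
    omega
  obtain ⟨T₁, hT₁, hT₁c⟩ :=
    Finset.exists_subset_card_eq (show s ≤ (T.erase x0).card by omega)
  set T₂ := T.erase x0 \ T₁ with hT₂def
  have hT₂c : T₂.card = s := by rw [hT₂def, Finset.card_sdiff_of_subset hT₁]; omega
  obtain ⟨P, hPAf, hPT, hPc⟩ := exists_pads Af T hTAf (h - 1 - s) (by omega)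
  have hx0T₁ : x0 ∉ T₁ := fun hmem => Finset.notMem_erase x0 T (hT₁ hmem)
  have hx0T₂ : x0 ∉ T₂ := fun hmem => Finset.notMem_erase x0 T (Finset.sdiff_subset hmem)
  have hx0P : x0 ∉ P := fun hmem => Finset.disjoint_left.1 hPT hmem hx0T
  have hd1 : Disjoint T₁ P := (hPT.symm.mono_left (hT₁.trans hT'T))
  have hd2 : Disjoint T₂ P :=
    (hPT.symm.mono_left ((Finset.sdiff_subset).trans hT'T))
  set L := insert x0 (T₁ ∪ P) with hLdef
  set R := insert x0 (T₂ ∪ P) with hRdef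
  have hx0LU : x0 ∉ T₁ ∪ P := by simp [hx0T₁, hx0P]
  have hx0RU : x0 ∉ T₂ ∪ P := by simp [hx0T₂, hx0P]
  have hLc : L.card = h := by
    rw [hLdef, Finset.card_insert_of_notMem hx0LU,
      Finset.card_union_of_disjoint hd1, hT₁c, hPc]
    omega
  have hRc : R.card = h := by
    rw [hRdef, Finset.card_insert_of_notMem hx0RU,
      Finset.card_union_of_disjoint hd2, hT₂c, hPc]
    omega
  have hLA : ↑L ⊆ A := by
    intro y hy
    rcases Finset.mem_insert.1 hy with rfl | h'
    · exact hTA hx0T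
    · rcases Finset.mem_union.1 h' with h'' | h''
      · exact hTA (hT'T (hT₁ h''))
      · exact hfin.mem_toFinset.1 (hPAf h'')
  have hRA : ↑R ⊆ A := by
    intro y hy
    rcases Finset.mem_insert.1 hy with rfl | h'
    · exact hTA hx0T
    · rcases Finset.mem_union.1 h' with h'' | h''
      · exact hTA (hT'T (Finset.sdiff_subset h''))
      · exact hfin.mem_toFinset.1 (hPAf h'')
  set l : V → F := fun y => if y = x0 then lam else if y ∈ T₁ then c y else 1 with hldef
  set m : V → F := fun y => if y = x0 then lam - c x0 else if y ∈ T₂ then -c y else 1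
    with hmdef
  have hsplit : c x0 • x0 + ((∑ y ∈ T₂, c y • y) + (∑ y ∈ T₁, c y • y)) = 0 := by
    rw [hT₂def, Finset.sum_sdiff hT₁, Finset.add_sum_erase T (fun y => c y • y) hx0T]
    exact hsum
  have key := Sh_apply hA L R hLA hRA hLc hRc l m
    (by
      intro y hy
      rw [hldef]
      rcases eq_or_ne y x0 with rfl | hyx
      · simpa using hlam0
      · by_cases hyT : y ∈ T₁
        · simpa [hyx, hyT] using hc y (hT'T (hT₁ hyT))
        · simp [hyx, hyT])
    (by
      intro y hy
      rw [hmdef]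
      rcases eq_or_ne y x0 with rfl | hyx
      · simpa using sub_ne_zero.2 hlamd
      · by_cases hyT : y ∈ T₂
        · simpa [hyx, hyT] using hc y (hT'T (Finset.sdiff_subset hyT))
        · simp [hyx, hyT])
    (by
      rw [hLdef, hRdef, Finset.sum_insert hx0LU, Finset.sum_insert hx0RU,
        Finset.sum_union hd1, Finset.sum_union hd2]
      have lx0 : l x0 = lam := by rw [hldef]; simp
      have mx0 : m x0 = lam - c x0 := by rw [hmdef]; simp
      have e1 : ∑ y ∈ T₁, l y • y = ∑ y ∈ T₁, c y • y :=
        Finset.sum_congr rfl fun y hy => by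
          have hyx : y ≠ x0 := fun hh => hx0T₁ (hh ▸ hy)
          rw [hldef]; simp [hyx, hy]
      have e2 : ∑ y ∈ T₂, m y • y = ∑ y ∈ T₂, (- c y) • y :=
        Finset.sum_congr rfl fun y hy => by
          have hyx : y ≠ x0 := fun hh => hx0T₂ (hh ▸ hy)
          rw [hmdef]; simp [hyx, hy]
      have e3 : ∑ y ∈ P, l y • y = ∑ y ∈ P, y :=
        Finset.sum_congr rfl fun y hy => by
          have hyx : y ≠ x0 := fun hh => hx0P (hh ▸ hy)
          rw [hldef]
          simp [hyx, Finset.disjoint_left.1 hd1.symm hy]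
      have e4 : ∑ y ∈ P, m y • y = ∑ y ∈ P, y :=
        Finset.sum_congr rfl fun y hy => by
          have hyx : y ≠ x0 := fun hh => hx0P (hh ▸ hy)
          rw [hmdef]
          simp [hyx, Finset.disjoint_left.1 hd2.symm hy]
      rw [lx0, mx0, e1, e2, e3, e4, sub_smul]
      rw [← sub_eq_zero, ← hsplit]
      simp only [neg_smul, Finset.sum_neg_distrib]
      abel)
  rcases Nat.eq_zero_or_pos s with rfl | hs1
  · obtain ⟨-, hco⟩ := key x0 (Finset.mem_insert_self _ _)
    have lx0 : l x0 = lam := by rw [hldef]; simp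
    have mx0 : m x0 = lam - c x0 := by rw [hmdef]; simp
    rw [lx0, mx0] at hco
    exact hc x0 hx0T (sub_eq_self.1 hco)
  · obtain ⟨y0, hy0⟩ := Finset.card_pos.1 (show 0 < T₁.card by omega)
    have hy0T : y0 ∈ T := hT'T (hT₁ hy0)
    have hy0x0 : y0 ≠ x0 := fun hh => hx0T₁ (hh ▸ hy0)
    obtain ⟨hy0R, -⟩ := key y0
      (Finset.mem_insert_of_mem (Finset.mem_union_left _ hy0))
    rcases Finset.mem_insert.1 hy0R with h' | h'
    · exact hy0x0 h'
    · rcases Finset.mem_union.1 h' with h'' | h''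
      · exact (Finset.mem_sdiff.1 h'').2 hy0
      · exact Finset.disjoint_left.1 hPT h'' hy0T

end Helpers

/-- From a family of columns all of whose short dependencies are trivial, build the code. -/
lemma build_code {F : Type*} [Field F] [DecidableEq F] {n r d : ℕ} (hrn : r ≤ n)
    (u : Fin n → (Fin r → F))
    (hgood : ∀ x : Fin n → F, (∑ i, x i • u i) = 0 → x ≠ 0 → d ≤ hammingNorm x) :
    ∃ C : Submodule F (Fin n → F), Module.finrank F C = n - r ∧
      ∀ x ∈ C, x ≠ 0 → d ≤ hammingNorm x := by
  classical
  set φ : (Fin n → F) →ₗ[F] (Fin r → F) := Fintype.linearCombination F u with hφ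
  have hrank := LinearMap.finrank_range_add_finrank_ker φ
  rw [Module.finrank_fin_fun] at hrank
  have hle : Module.finrank F (LinearMap.range φ) ≤ r :=
    (Submodule.finrank_le _).trans_eq (Module.finrank_fin_fun F)
  have hK : n - r ≤ Module.finrank F (LinearMap.ker φ) := by omega
  obtain ⟨f, hf⟩ := exists_linearIndependent_of_le_finrank hK
  have hg : LinearIndependent F ((LinearMap.ker φ).subtype ∘ f) :=
    hf.map' _ (Submodule.ker_subtype _)
  refine ⟨Submodule.span F (Set.range ((LinearMap.ker φ).subtype ∘ f)), ?_, ?_⟩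
  · rw [finrank_span_eq_card hg, Fintype.card_fin]
  · intro x hx hx0
    have hspan : Submodule.span F (Set.range ((LinearMap.ker φ).subtype ∘ f)) ≤
        LinearMap.ker φ := by
      rw [Submodule.span_le]
      rintro _ ⟨i, rfl⟩
      exact (f i).2
    have hxker : φ x = 0 := LinearMap.mem_ker.1 (hspan hx)
    refine hgood x ?_ hx0
    rw [hφ] at hxker
    rw [← hxker]
    rfl

theorem stmt_13 {F : Type*} [Field F] [Fintype F] [DecidableEq F] {n r h : ℕ}
    (hh : 2 ≤ h) (h1 : 2 * h ≤ r) (h2 : r < n)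
    (hex : ∃ A : Set (Fin r → F), IsShLinearSet F A h ∧ A.ncard = n + 1) :
    ∃ C : Submodule F (Fin n → F), Module.finrank F C = n - r ∧
      ∀ x ∈ C, x ≠ 0 → 2 * h + 1 ≤ hammingNorm x := by
  classical
  obtain ⟨A, hA, hcard⟩ := hex
  have hfin : A.Finite := by
    by_contra hinf
    rw [Set.Infinite.ncard hinf] at hcard
    omega
  have hAbig : 2 * h + 2 ≤ A.ncard := by rw [hcard]; omega
  have hAfcard : hfin.toFinset.card = n + 1 := by
    rw [← Set.ncard_eq_toFinset_card _ hfin]; exact hcard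
  let e : Fin (n + 1) ≃ ↥hfin.toFinset :=
    (finCongr hAfcard.symm).trans hfin.toFinset.equivFin.symm
  set a : Fin (n + 1) → (Fin r → F) := fun i => ↑(e i) with hadef
  have hainj : Function.Injective a := Subtype.val_injective.comp e.injective
  have haA : ∀ i, a i ∈ A := fun i => hfin.mem_toFinset.1 (e i).2
  have hwinj : Function.Injective (fun i : Fin n => a i.succ) :=
    hainj.comp (Fin.succ_injective n)
  haveI : Nonempty (Fin n) := ⟨⟨0, by omega⟩⟩
  -- generic reduction: it suffices to package any short dependency as a finset in `A`
  have main : ∀ (u : Fin n → (Fin r → F)), (∀ (x : Fin n → F), x ≠ 0 →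
      (∑ i, x i • u i) = 0 → hammingNorm x ≤ 2 * h →
      ∃ T : Finset (Fin r → F), ∃ c : (Fin r → F) → F, ↑T ⊆ A ∧ 1 ≤ T.card ∧
        (∀ y ∈ T, c y ≠ 0) ∧ (∑ y ∈ T, c y • y) = 0 ∧
        ((T.card ≤ 2 * h ∧ 3 ≤ Fintype.card F) ∨
          (T.card ≤ 2 * h + 1 ∧ (∑ y ∈ T, c y) = 0 ∧ Fintype.card F = 2))) →
      ∃ C : Submodule F (Fin n → F), Module.finrank F C = n - r ∧
        ∀ x ∈ C, x ≠ 0 → 2 * h + 1 ≤ hammingNorm x := by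
    intro u hu
    refine build_code (le_of_lt h2) u ?_
    intro x hx hx0
    by_contra hlt
    push_neg at hlt
    obtain ⟨T, c, hTA, hT1, hc, hsum, hcases⟩ := hu x hx0 hx (by omega)
    rcases hcases with ⟨hTle, hq⟩ | ⟨hTle, hcsum, hq2⟩
    · rcases Nat.even_or_odd T.card with ⟨s, hs⟩ | ⟨s, hs⟩
      · exact Sh_even hA hfin hAbig (s := s) (by omega) (by omega) T hTA (by omega)
          c hc hsum
      · exact Sh_odd hA hfin hAbig hq (s := s) (by omega) T hTA (by omega) c hc hsum
    · rcases Nat.even_or_odd T.card with ⟨s, hs⟩ | ⟨s, hs⟩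
      · exact Sh_even hA hfin hAbig (s := s) (by omega) (by omega) T hTA (by omega)
          c hc hsum
      · -- odd cardinality impossible over F₂ when coefficients sum to zero
        have h01 : ∀ z : F, z = 0 ∨ z = 1 := by
          intro z
          by_contra hz
          push_neg at hz
          have hcard3 : ({0, 1, z} : Finset F).card = 3 := by
            rw [Finset.card_insert_of_notMem (by simp [Ne.symm hz.1]),
              Finset.card_insert_of_notMem (by simp [Ne.symm hz.2]),
              Finset.card_singleton]
          have := Finset.card_le_univ ({0, 1, z} : Finset F)
          rw [hcard3, hq2] at this
          omega
        have hone : ∀ y ∈ T, c y = 1 := by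
          intro y hy
          rcases h01 (c y) with h' | h'
          · exact absurd h' (hc y hy)
          · exact h'
        have h2z : (1 + 1 : F) = 0 := by
          rcases h01 (1 + 1) with h' | h'
          · exact h'
          · exact absurd (add_eq_right.1 h') one_ne_zero
        have hbad : (0 : F) = 1 := by
          rw [← hcsum, Finset.sum_congr rfl hone, Finset.sum_const, nsmul_eq_mul,
            mul_one, hs]
          push_cast
          rw [show ((2 : F) * s + 1) = (1 + 1) * s + 1 by ring, h2z]
          ring
        exact one_ne_zero hbad.symm
  by_cases hq : 3 ≤ Fintype.card F
  · -- big field: use the columns `a (i+1)` directly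
    apply main (fun i => a i.succ)
    intro x hx0 hx hnorm
    have hinv : ∀ i : Fin n,
        Function.invFun (fun j : Fin n => a j.succ) (a i.succ) = i :=
      fun i => Function.leftInverse_invFun hwinj i
    set S : Finset (Fin n) := {i | x i ≠ 0} with hSdef
    have hScard : S.card = hammingNorm x := rfl
    have hSsum : ∑ i ∈ S, x i • a i.succ = 0 := by
      rw [← hx]
      exact Finset.sum_filter_of_ne (fun i _ hne => by
        intro hxi
        exact hne (by rw [hxi, zero_smul]))
    have hSne : S.Nonempty := by
      obtain ⟨i, hi⟩ := Function.ne_iff.1 hx0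
      have hi' : x i ≠ 0 := by simpa using hi
      exact ⟨i, by simp [hSdef, hi']⟩
    refine ⟨S.image (fun i => a i.succ),
      fun y => x (Function.invFun (fun i : Fin n => a i.succ) y),
      ?_, ?_, ?_, ?_, Or.inl ⟨?_, hq⟩⟩
    · intro y hy
      obtain ⟨i, -, rfl⟩ := Finset.mem_image.1 hy
      exact haA _
    · rw [Finset.card_image_of_injective _ hwinj]
      exact hSne.card_pos
    · intro y hy
      obtain ⟨i, hi, rfl⟩ := Finset.mem_image.1 hy
      simp only [hinv]
      exact (Finset.mem_filter.1 hi).2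
    · rw [Finset.sum_image (fun i _ j _ hij => hwinj hij)]
      simp only [hinv]
      exact hSsum
    · rw [Finset.card_image_of_injective _ hwinj, hScard]
      exact hnorm
  · -- field with two elements: use the difference columns
    have hq2 : Fintype.card F = 2 := by
      have := Fintype.one_lt_card (α := F)
      omega
    apply main (fun i => a i.succ - a 0)
    intro x hx0 hx hnorm
    have hinv : ∀ i : Fin n,
        Function.invFun (fun j : Fin n => a j.succ) (a i.succ) = i :=
      fun i => Function.leftInverse_invFun hwinj i
    set S : Finset (Fin n) := {i | x i ≠ 0} with hSdef
    have hScard : S.card = hammingNorm x := rfl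
    have hSsum : ∑ i ∈ S, x i • (a i.succ - a 0) = 0 := by
      rw [← hx]
      exact Finset.sum_filter_of_ne (fun i _ hne => by
        intro hxi
        exact hne (by rw [hxi, zero_smul]))
    have hSne : S.Nonempty := by
      obtain ⟨i, hi⟩ := Function.ne_iff.1 hx0
      have hi' : x i ≠ 0 := by simpa using hi
      exact ⟨i, by simp [hSdef, hi']⟩
    have hSle : S.card ≤ 2 * h := by rw [hScard]; exact hnorm
    set c0 : F := ∑ i ∈ S, x i with hc0def
    have hexp : ∑ i ∈ S, x i • a i.succ = c0 • a 0 := by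
      rw [← sub_eq_zero, hc0def, Finset.sum_smul, ← Finset.sum_sub_distrib, ← hSsum]
      exact Finset.sum_congr rfl fun i hi => (smul_sub _ _ _).symm
    have himg : ∀ P : Prop, P → P := fun _ p => p
    have hmemS : ∀ i ∈ S, x i ≠ 0 := fun i hi => (Finset.mem_filter.1 hi).2
    have hTsum0 : ∑ y ∈ S.image (fun i => a i.succ),
        (fun y => x (Function.invFun (fun i : Fin n => a i.succ) y)) y • y
        = ∑ i ∈ S, x i • a i.succ := by
      rw [Finset.sum_image (fun i _ j _ hij => hwinj hij)]
      simp only [hinv]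
    have hTcsum0 : ∑ y ∈ S.image (fun i => a i.succ),
        (fun y => x (Function.invFun (fun i : Fin n => a i.succ) y)) y = c0 := by
      rw [Finset.sum_image (fun i _ j _ hij => hwinj hij), hc0def]
      simp only [hinv]
    by_cases hc0z : c0 = 0
    · refine ⟨S.image (fun i => a i.succ),
        fun y => x (Function.invFun (fun i : Fin n => a i.succ) y),
        ?_, ?_, ?_, ?_, Or.inr ⟨?_, ?_, hq2⟩⟩
      · intro y hy
        obtain ⟨i, -, rfl⟩ := Finset.mem_image.1 hy
        exact haA _
      · rw [Finset.card_image_of_injective _ hwinj]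
        exact hSne.card_pos
      · intro y hy
        obtain ⟨i, hi, rfl⟩ := Finset.mem_image.1 hy
        simp only [hinv]
        exact hmemS i hi
      · rw [hTsum0, hexp, hc0z, zero_smul]
      · rw [Finset.card_image_of_injective _ hwinj]
        omega
      · rw [hTcsum0]
        exact hc0z
    · have ha0img : a 0 ∉ S.image (fun i => a i.succ) := by
        intro hmem
        obtain ⟨i, -, hi⟩ := Finset.mem_image.1 hmem
        exact Fin.succ_ne_zero i (hainj hi)
      refine ⟨insert (a 0) (S.image (fun i => a i.succ)),
        fun y => if y = a 0 then -c0
          else x (Function.invFun (fun i : Fin n => a i.succ) y),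
        ?_, ?_, ?_, ?_, Or.inr ⟨?_, ?_, hq2⟩⟩
      · intro y hy
        rcases Finset.mem_insert.1 hy with rfl | h'
        · exact haA _
        · obtain ⟨i, -, rfl⟩ := Finset.mem_image.1 h'
          exact haA _
      · rw [Finset.card_insert_of_notMem ha0img]
        omega
      · intro y hy
        rcases Finset.mem_insert.1 hy with rfl | h'
        · simpa using neg_ne_zero.2 hc0z
        · obtain ⟨i, hi, rfl⟩ := Finset.mem_image.1 h'
          have hne : a i.succ ≠ a 0 := fun hh => Fin.succ_ne_zero i (hainj hh)
          simp only [if_neg hne, hinv]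
          exact hmemS i hi
      · rw [Finset.sum_insert ha0img]
        beta_reduce
        rw [if_pos rfl]
        have : ∑ y ∈ S.image (fun i => a i.succ),
            (if y = a 0 then -c0
              else x (Function.invFun (fun i : Fin n => a i.succ) y)) • y
            = ∑ i ∈ S, x i • a i.succ := by
          rw [← hTsum0]
          refine Finset.sum_congr rfl fun y hy => ?_
          have hne : y ≠ a 0 := fun hh => ha0img (hh ▸ hy)
          rw [if_neg hne]
        rw [this, hexp, neg_smul, neg_add_cancel]
      · rw [Finset.card_insert_of_notMem ha0img,
          Finset.card_image_of_injective _ hwinj]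
        omega
      · rw [Finset.sum_insert ha0img]
        beta_reduce
        rw [if_pos rfl]
        have : ∑ y ∈ S.image (fun i => a i.succ),
            (if y = a 0 then -c0
              else x (Function.invFun (fun i : Fin n => a i.succ) y))
            = c0 := by
          rw [← hTcsum0]
          refine Finset.sum_congr rfl fun y hy => ?_
          have hne : y ≠ a 0 := fun hh => ha0img (hh ▸ hy)
          rw [if_neg hne]
        rw [this, neg_add_cancel]
end

section
/- If there exists an [n, k, d] linear code over F_q with d ≥ 2h+1, then there exists an S_h-set of n+1 elements in F_q^{n-k}, where n-k ≥ 2h. -/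
open Finset in
private lemma hn_sub_le {ι : Type*} [Fintype ι] {M : Type*} [AddGroup M] [DecidableEq M]
    (x y : ι → M) : hammingNorm (x - y) ≤ hammingNorm x + hammingNorm y := by
  rw [show hammingNorm (x - y) = hammingDist x y by
    simp_rw [hammingNorm, hammingDist, Pi.sub_apply, ne_eq, sub_eq_zero]]
  calc hammingDist x y ≤ hammingDist x 0 + hammingDist 0 y := hammingDist_triangle x 0 y
    _ = hammingNorm x + hammingNorm y := by rw [hammingDist_zero_right, hammingDist_zero_left]

private lemma hn_sum_le {ι : Type*} [Fintype ι] {M : Type*} [AddCommGroup M] [DecidableEq M]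
    {κ : Type*} (s : Finset κ) (v : κ → ι → M) :
    hammingNorm (∑ i ∈ s, v i) ≤ ∑ i ∈ s, hammingNorm (v i) := by
  classical
  induction s using Finset.induction_on with
  | empty => simp
  | insert a s hx ih =>
    rw [Finset.sum_insert hx, Finset.sum_insert hx]
    calc hammingNorm (v a + ∑ i ∈ s, v i)
        = hammingNorm (v a - (-∑ i ∈ s, v i)) := by rw [sub_neg_eq_add]
      _ ≤ hammingNorm (v a) + hammingNorm (-∑ i ∈ s, v i) := hn_sub_le _ _
      _ = hammingNorm (v a) + hammingNorm (0 - ∑ i ∈ s, v i) := by rw [zero_sub]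
      _ ≤ hammingNorm (v a) + (hammingNorm (0 : ι → M) + hammingNorm (∑ i ∈ s, v i)) :=
          Nat.add_le_add_left (hn_sub_le _ _) _
      _ = hammingNorm (v a) + hammingNorm (∑ i ∈ s, v i) := by rw [hammingNorm_zero, zero_add]
      _ ≤ hammingNorm (v a) + ∑ i ∈ s, hammingNorm (v i) := Nat.add_le_add_left ih _

private lemma hn_single_le {ι : Type*} [Fintype ι] [DecidableEq ι] {M : Type*} [Zero M]
    [DecidableEq M] (j : ι) (x : M) : hammingNorm (Pi.single j x : ι → M) ≤ 1 := by
  classical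
  calc hammingNorm (Pi.single j x : ι → M) ≤ ({j} : Finset ι).card := by
        apply Finset.card_le_card
        intro i hi
        simp only [hammingNorm, Finset.mem_filter] at hi
        simp only [Finset.mem_singleton]
        by_contra hne
        exact hi.2 (Pi.single_eq_of_ne (M := fun _ => M) hne x)
    _ = 1 := Finset.card_singleton j

theorem stmt_15 {F : Type*} [Field F] [Fintype F] [DecidableEq F] {n k r d h : ℕ}
    (hh : 1 ≤ h) (hrk : r + k = n)
    (C : Submodule F (Fin n → F)) (hk : Module.finrank F C = k)
    (hmin : ∀ x ∈ C, x ≠ 0 → d ≤ hammingNorm x)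
    (hex : ∃ x ∈ C, x ≠ 0 ∧ hammingNorm x = d)
    (hd : 2 * h + 1 ≤ d) :
    (∃ S : Set (Fin r → F), IsShSet S h ∧ S.ncard = n + 1) ∧ 2 * h ≤ r := by
  classical
  -- d ≤ n
  obtain ⟨x0, hx0C, hx0ne, hx0d⟩ := hex
  have hdn : d ≤ n := by
    have := hammingNorm_le_card_fintype (x := x0)
    rw [hx0d, Fintype.card_fin] at this
    exact this
  have h2n : 2 * h ≤ n := by omega
  -- the quotient map
  have hfinpi : Module.finrank F (Fin n → F) = n := by
    simp [Module.finrank_pi]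
  have hfinQ : Module.finrank F ((Fin n → F) ⧸ C) = r := by
    have h1 := Submodule.finrank_quotient_add_finrank C
    rw [hk, hfinpi] at h1
    omega
  let e : ((Fin n → F) ⧸ C) ≃ₗ[F] (Fin r → F) :=
    LinearEquiv.ofFinrankEq _ _ (by rw [hfinQ]; simp [Module.finrank_pi])
  let π : (Fin n → F) →ₗ[F] (Fin r → F) := e.toLinearMap ∘ₗ C.mkQ
  have hπ0 : ∀ f : Fin n → F, π f = 0 ↔ f ∈ C := by
    intro f
    simp only [π, LinearMap.comp_apply, LinearEquiv.coe_coe,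
      EmbeddingLike.map_eq_zero_iff, Submodule.mkQ_apply, Submodule.Quotient.mk_eq_zero]
  have key : ∀ f : Fin n → F, π f = 0 → hammingNorm f ≤ 2 * h → f = 0 := by
    intro f h0 hw
    by_contra hne
    have := hmin f ((hπ0 f).1 h0) hne
    omega
  set c : Fin n → (Fin r → F) := fun i => π (Pi.single i 1) with hc
  have hcne : ∀ i, c i ≠ 0 := by
    intro i hcz
    have hz := key (Pi.single i 1) hcz (le_trans (hn_single_le i 1) (by omega))
    have := congrFun hz i
    simp at this
  have hcinj : Function.Injective c := by
    intro i j hij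
    by_contra hne
    have hπs : π (Pi.single i 1 - Pi.single j 1) = 0 := by
      rw [map_sub, sub_eq_zero]; exact hij
    have hw : hammingNorm (Pi.single i (1:F) - Pi.single j 1) ≤ 2 * h :=
      le_trans (hn_sub_le _ _)
        (le_trans (add_le_add (hn_single_le i 1) (hn_single_le j 1)) (by omega))
    have hz := key _ hπs hw
    have h1 := congrFun hz i
    rw [Pi.sub_apply, Pi.single_eq_same, Pi.single_eq_of_ne (M := fun _ => F) hne, sub_zero] at h1
    exact one_ne_zero h1
  -- the map from Option (Fin n)
  set g : Option (Fin n) → (Fin n → F) :=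
    fun o => o.elim 0 (fun j => Pi.single j 1) with hg
  set φ : Option (Fin n) → (Fin r → F) := fun o => π (g o) with hφ
  have hφnone : φ none = 0 := by simp [hφ, hg]
  have hφsome : ∀ j, φ (some j) = c j := by intro j; simp [hφ, hg, hc]
  have hφinj : Function.Injective φ := by
    intro o p hop
    cases o <;> cases p
    · rfl
    · rw [hφnone, hφsome] at hop; exact absurd hop.symm (hcne _)
    · rw [hφnone, hφsome] at hop; exact absurd hop (hcne _)
    · rw [hφsome, hφsome] at hop; rw [hcinj hop]
  have hgnorm : ∀ o, hammingNorm (g o) ≤ 1 := by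
    intro o
    cases o
    · simp [hg]
    · exact hn_single_le _ _
  set S : Set (Fin r → F) := insert 0 (Set.range c) with hS
  have hSφ : S = Set.range φ := by
    ext x
    constructor
    · rintro (rfl | ⟨i, rfl⟩)
      · exact ⟨none, hφnone⟩
      · exact ⟨some i, hφsome i⟩
    · rintro ⟨o, rfl⟩
      cases o
      · rw [hφnone]; exact Set.mem_insert _ _
      · rw [hφsome]; exact Set.mem_insert_of_mem _ ⟨_, rfl⟩
  -- counting lemma
  have hcount : ∀ (u : Fin h → Option (Fin n)), Function.Injective u → ∀ j : Fin n,
      ((∑ i, g (u i)) j ≠ 0 ↔ ∃ i, u i = some j) := by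
    intro u hu j
    have hterm : ∀ i, g (u i) j = if u i = some j then (1:F) else 0 := by
      intro i
      rcases hui : u i with _ | j'
      · simp [hg]
      · by_cases hjj : j' = j
        · subst hjj; simp [hg]
        · simp [hg, hjj, Pi.single_eq_of_ne (Ne.symm hjj)]
    have hsum : (∑ i, g (u i)) j
        = ((Finset.univ.filter fun i => u i = some j).card : F) := by
      rw [Finset.sum_apply]
      simp_rw [hterm]
      exact Finset.sum_boole _ _
    have hle : (Finset.univ.filter fun i => u i = some j).card ≤ 1 := by
      apply Finset.card_le_one.2
      intro i hi i' hi'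
      simp only [Finset.mem_filter] at hi hi'
      exact hu (hi.2.trans hi'.2.symm)
    rw [hsum]
    constructor
    · intro hne
      have hpos : (Finset.univ.filter fun i => u i = some j).card ≠ 0 := by
        intro hz; rw [hz] at hne; simp at hne
      obtain ⟨i, hi⟩ := Finset.card_ne_zero.1 hpos
      simp only [Finset.mem_filter] at hi
      exact ⟨i, hi.2⟩
    · rintro ⟨i, hi⟩
      have : i ∈ Finset.univ.filter fun i => u i = some j := by simp [hi]
      have h1 : (Finset.univ.filter fun i => u i = some j).card = 1 :=
        le_antisymm hle (Finset.card_pos.2 ⟨i, this⟩)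
      rw [h1]
      simp
  constructor
  · refine ⟨S, ?_, ?_⟩
    · -- S_h set
      intro a b ha hb haS hbS hsum
      have haS' : ∀ i, a i ∈ Set.range φ := fun i => hSφ ▸ haS i
      have hbS' : ∀ i, b i ∈ Set.range φ := fun i => hSφ ▸ hbS i
      choose a' ha' using haS'
      choose b' hb' using hbS'
      have ha'inj : Function.Injective a' := by
        intro i j hij
        exact ha (by rw [← ha', ← ha', hij])
      have hb'inj : Function.Injective b' := by
        intro i j hij
        exact hb (by rw [← hb', ← hb', hij])
      set fa : Fin n → F := ∑ i, g (a' i) with hfa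
      set fb : Fin n → F := ∑ i, g (b' i) with hfb
      have hπab : π (fa - fb) = 0 := by
        rw [map_sub, hfa, hfb, map_sum, map_sum, sub_eq_zero]
        calc ∑ i, π (g (a' i)) = ∑ i, a i :=
              Finset.sum_congr rfl fun i _ => ha' i
          _ = ∑ i, b i := hsum
          _ = ∑ i, π (g (b' i)) :=
              (Finset.sum_congr rfl fun i _ => hb' i).symm
      have hwab : hammingNorm (fa - fb) ≤ 2 * h := by
        rw [hfa, hfb, ← Finset.sum_sub_distrib]
        calc hammingNorm (∑ i, (g (a' i) - g (b' i)))
            ≤ ∑ i : Fin h, hammingNorm (g (a' i) - g (b' i)) := hn_sum_le _ _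
          _ ≤ ∑ _i : Fin h, 2 := Finset.sum_le_sum fun i _ =>
              le_trans (hn_sub_le _ _) (add_le_add (hgnorm _) (hgnorm _))
          _ = 2 * h := by simp [Finset.sum_const, Fintype.card_fin, Nat.mul_comm]
      have hab : fa = fb := by
        have := key _ hπab hwab
        exact sub_eq_zero.1 this
      have hsome : ∀ j : Fin n, (∃ i, a' i = some j) ↔ (∃ i, b' i = some j) := by
        intro j
        rw [← hcount a' ha'inj j, ← hcount b' hb'inj j]
        show fa j ≠ 0 ↔ fb j ≠ 0
        rw [hab]
      -- Finset argument
      set A : Finset (Option (Fin n)) := Finset.univ.image a' with hA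
      set B : Finset (Option (Fin n)) := Finset.univ.image b' with hB
      have hAcard : A.card = h := by
        rw [hA, Finset.card_image_of_injective _ ha'inj, Finset.card_univ, Fintype.card_fin]
      have hBcard : B.card = h := by
        rw [hB, Finset.card_image_of_injective _ hb'inj, Finset.card_univ, Fintype.card_fin]
      have hABsome : ∀ j, some j ∈ A ↔ some j ∈ B := by
        intro j
        simp only [hA, hB, Finset.mem_image, Finset.mem_univ, true_and]
        exact hsome j
      have herase : A.erase none = B.erase none := by
        ext o
        cases o
        · simp
        · simp only [Finset.mem_erase, ne_eq, reduceCtorEq, not_false_eq_true, true_and]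
          exact hABsome _
      have hnonemem : none ∈ A ↔ none ∈ B := by
        constructor
        · intro hmem
          by_contra hno
          have h1 : (A.erase none).card = h - 1 := by
            rw [Finset.card_erase_of_mem hmem, hAcard]
          have h2 : (B.erase none).card = h := by
            rw [Finset.erase_eq_of_notMem hno, hBcard]
          rw [herase, h2] at h1
          omega
        · intro hmem
          by_contra hno
          have h1 : (B.erase none).card = h - 1 := by
            rw [Finset.card_erase_of_mem hmem, hBcard]
          have h2 : (A.erase none).card = h := by
            rw [Finset.erase_eq_of_notMem hno, hAcard]
          rw [herase, h1] at h2
          omega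
      have hABeq : A = B := by
        ext o
        cases o
        · exact hnonemem
        · exact hABsome _
      have hrangea : Set.range a = φ '' ↑A := by
        rw [show a = φ ∘ a' from funext fun i => (ha' i).symm, Set.range_comp, hA,
          Finset.coe_image, Finset.coe_univ, Set.image_univ]
      have hrangeb : Set.range b = φ '' ↑B := by
        rw [show b = φ ∘ b' from funext fun i => (hb' i).symm, Set.range_comp, hB,
          Finset.coe_image, Finset.coe_univ, Set.image_univ]
      rw [hrangea, hrangeb, hABeq]
    · -- cardinality
      have h0 : (0 : Fin r → F) ∉ Set.range c := by
        rintro ⟨i, hi⟩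
        exact hcne i hi
      rw [hS, Set.ncard_insert_of_notMem h0 (Set.toFinite _)]
      rw [← Set.image_univ, Set.ncard_image_of_injective _ hcinj, Set.ncard_univ]
      simp [Nat.card_eq_fintype_card]
  · -- 2h ≤ r
    set ι : Fin (2 * h) → Fin n := Fin.castLE h2n with hι
    have hιinj : Function.Injective ι := Fin.castLE_injective h2n
    have hli : LinearIndependent F (fun i : Fin (2 * h) => c (ι i)) := by
      rw [Fintype.linearIndependent_iff]
      intro gc hgc i0
      set f : Fin n → F := ∑ i, gc i • (Pi.single (ι i) 1 : Fin n → F) with hf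
      have hπf : π f = 0 := by
        rw [hf, map_sum]
        simp_rw [map_smul]
        exact hgc
      have hwf : hammingNorm f ≤ 2 * h := by
        rw [hf]
        calc hammingNorm (∑ i, gc i • (Pi.single (ι i) 1 : Fin n → F))
            ≤ ∑ i : Fin (2*h), hammingNorm (gc i • (Pi.single (ι i) 1 : Fin n → F)) := hn_sum_le _ _
          _ ≤ ∑ _i : Fin (2*h), 1 := Finset.sum_le_sum fun i _ =>
              le_trans hammingNorm_smul_le_hammingNorm (hn_single_le _ _)
          _ = 2 * h := by simp
      have hf0 := key f hπf hwf
      have hval : f (ι i0) = gc i0 := by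
        rw [hf, Finset.sum_apply]
        rw [Finset.sum_eq_single i0]
        · simp
        · intro i _ hne
          have : ι i ≠ ι i0 := fun hc => hne (hιinj hc)
          simp [Pi.single_eq_of_ne (Ne.symm this)]
        · intro habs; exact absurd (Finset.mem_univ i0) habs
      rw [hf0] at hval
      exact hval.symm
    have := hli.fintype_card_le_finrank
    rwa [Fintype.card_fin, Module.finrank_pi, Fintype.card_fin] at this
end
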